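/- Let $C \subseteq \mathbb{R}^d$ be compact with $\tau(C) > 0$, and let $u \in C$ be a right endpoint of some gap of $C$. Then for every $\eta > 0$ there exists $\delta > 0$ with $\delta\sqrt{d} < \eta$ such that $u + (\delta, \delta, \dots, \delta) \in C$. -/

import Mathlib

open Set
open scoped ENNReal Classical

noncomputable section

/-- `ℝ^d` with the Euclidean metric. -/
abbrev Euc (d : ℕ) := EuclideanSpace ℝ (Fin d)

/-- `G` is a gap of `C`: an (open) path-connected component of the complement of `C`. -/
def IsGap {d : ℕ} (C G : Set (Euc d)) : Prop :=
  ∃ x ∈ Cᶜ, G = {y | JoinedIn Cᶜ x y}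

/-- The bounded gaps of `C`. -/
def boundedGaps {d : ℕ} (C : Set (Euc d)) : Set (Set (Euc d)) :=
  {G | IsGap C G ∧ Bornology.IsBounded G}

/-- The union of all unbounded gaps of `C` (for `d = 1` this is the union of the two
unbounded intervals; for `d ≥ 2` it is the single unbounded component). -/
def unboundedGapsUnion {d : ℕ} (C : Set (Euc d)) : Set (Euc d) :=
  ⋃₀ {G | IsGap C G ∧ ¬ Bornology.IsBounded G}

/-- Distance between two sets, as an extended nonnegative real. -/
def setEDist {d : ℕ} (s t : Set (Euc d)) : ℝ≥0∞ :=
  ⨅ x ∈ s, EMetric.infEdist x t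

/-- The Falconer–Yavicoli thickness `τ(C)` of a set `C ⊆ ℝ^d`: the infimum, over all bounded
gaps `G`, of the distance from `G` to the union of all other gaps of diameter at least
`diam G` together with the unbounded gap, divided by `diam G`.  (For bounded gaps enumerated
with non-increasing diameters this agrees with the definition
`⨅ n, dist (Gₙ, G₁ ∪ ⋯ ∪ Gₙ₋₁ ∪ E) / diam Gₙ`.)  If `C` has no bounded gap, `τ(C)` is `∞`
when `C` has non-empty interior and `0` otherwise. -/
def thickness {d : ℕ} (C : Set (Euc d)) : ℝ≥0∞ :=
  if (boundedGaps C).Nonempty then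
    ⨅ G ∈ boundedGaps C,
      setEDist G
        ((⋃₀ {G' | G' ∈ boundedGaps C ∧ G' ≠ G ∧ EMetric.diam G ≤ EMetric.diam G'})
          ∪ unboundedGapsUnion C) / EMetric.diam G
  else if (interior C).Nonempty then ⊤ else 0

/-- The `ε`-thickness `τ_ε(C)`: infimum over bounded gaps `G` and boundary points `u` of `G`
of `dist (u, ⋃_{G' ∈ H_{ε,G}} G' ∪ E) / diam G`, where `H_{ε,G}` consists of the gaps
`G' ≠ G` with `(1-ε) diam G < diam G'`. -/
def epsThickness {d : ℕ} (ε : ℝ) (C : Set (Euc d)) : ℝ≥0∞ :=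
  ⨅ G ∈ boundedGaps C, ⨅ u ∈ frontier G,
    EMetric.infEdist u
      ((⋃₀ {G' | G' ∈ boundedGaps C ∧ G' ≠ G ∧
          ENNReal.ofReal (1 - ε) * EMetric.diam G < EMetric.diam G'})
        ∪ unboundedGapsUnion C) / EMetric.diam G

/-- The point of `ℝ^{2d}` whose first `d` coordinates are those of `y` and whose last `d`
coordinates are those of `z`. -/
def pairPoint {d : ℕ} (y z : Euc d) : Euc (2 * d) :=
  WithLp.toLp 2 (fun i => if h : (i : ℕ) < d then y ⟨(i : ℕ), h⟩
           else z ⟨(i : ℕ) - d, by have := i.isLt; omega⟩)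

/-- The product `C₁ × C₂ ⊆ ℝ^{2d}` of two subsets of `ℝ^d`. -/
def setProd {d : ℕ} (C₁ C₂ : Set (Euc d)) : Set (Euc (2 * d)) :=
  {p | ∃ y ∈ C₁, ∃ z ∈ C₂, p = pairPoint y z}

/-- The pinned distance set `Δ_x(A) = {|x - y| : y ∈ A}`. -/
def pinnedDist {m : ℕ} (x : Euc m) (A : Set (Euc m)) : Set ℝ :=
  (fun y => dist x y) '' A

/-- The index `i` of `{1, …, d}` viewed inside `{1, …, 2d}` (first block). -/
def lo {d : ℕ} (i : Fin d) : Fin (2 * d) := ⟨(i : ℕ), by have := i.isLt; omega⟩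

/-- The index `i + d` of `{1, …, 2d}` (second block). -/
def hi {d : ℕ} (i : Fin d) : Fin (2 * d) := ⟨(i : ℕ) + d, by have := i.isLt; omega⟩

/-- The map `g_{x,t} : ℝ^d → ℝ^d`, `g_{x,t}(y)_i = x_{i+d} + √(t²/d - (x_i - y_i)²)`. -/
def gMap {d : ℕ} (x : Euc (2 * d)) (t : ℝ) (y : Euc d) : Euc d :=
  WithLp.toLp 2 (fun i => x (hi i) + Real.sqrt (t ^ 2 / (d : ℝ) - (x (lo i) - y i) ^ 2))

/-- `u` is a right endpoint of the gap `H`: a boundary point of `H` such that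
`u + (ε, …, ε) ∉ H` for every `ε > 0`. -/
def IsRightEndpoint {d : ℕ} (H : Set (Euc d)) (u : Euc d) : Prop :=
  u ∈ frontier H ∧ ∀ ε > (0 : ℝ), (WithLp.toLp 2 (fun i => u i + ε) : Euc d) ∉ H

/-- A closed axis-parallel rectangle (box) in `ℝ^d`. -/
def IsClosedBox {d : ℕ} (R : Set (Euc d)) : Prop :=
  ∃ a b : Fin d → ℝ, R = {y : Euc d | ∀ i, y i ∈ Set.Icc (a i) (b i)}

/-- Complement of a closed ball is path-connected in dimension `> 1`. -/
lemma isPathConnected_norm_gt {E : Type*} [NormedAddCommGroup E] [NormedSpace ℝ E]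
    (h : 1 < Module.rank ℝ E) (R : ℝ) (hR : 0 ≤ R) :
    IsPathConnected {z : E | R < ‖z‖} := by
  set r : ℝ := R + 1 with hr
  have hrR : R < r := by simp [hr]
  have hr0 : 0 ≤ r := le_trans hR hrR.le
  have hsp : IsPathConnected (Metric.sphere (0 : E) r) :=
    isPathConnected_sphere h 0 hr0
  have hsub : Metric.sphere (0 : E) r ⊆ {z : E | R < ‖z‖} := by
    intro z hz
    simp only [Metric.mem_sphere, dist_zero_right] at hz
    simpa [hz] using hrR
  have key : ∀ x ∈ {z : E | R < ‖z‖}, JoinedIn {z : E | R < ‖z‖} x ((r / ‖x‖) • x) := by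
    intro x hx
    have hx0 : 0 < ‖x‖ := lt_of_le_of_lt hR hx
    have hseg : segment ℝ x ((r / ‖x‖) • x) ⊆ {z : E | R < ‖z‖} := by
      rintro z ⟨a, b, ha, hb, hab, rfl⟩
      have h1 : ‖a • x + b • ((r / ‖x‖) • x)‖ = (a + b * (r / ‖x‖)) * ‖x‖ := by
        rw [smul_smul, ← add_smul, norm_smul, Real.norm_eq_abs,
          abs_of_nonneg (by positivity)]
      rw [mem_setOf_eq, h1]
      have h2 : (a + b * (r / ‖x‖)) * ‖x‖ = a * ‖x‖ + b * r := by
        field_simp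
      rw [h2]
      rcases eq_or_lt_of_le ha with h0 | h0
      · have hb1 : b = 1 := by linarith
        simp only [← h0, hb1]
        nlinarith
      · nlinarith [mul_le_mul_of_nonneg_left hrR.le hb,
          mul_lt_mul_of_pos_left (mem_setOf_eq ▸ hx) h0]
    have hpc : IsPathConnected (segment ℝ x ((r / ‖x‖) • x)) :=
      (convex_segment _ _).isPathConnected ⟨x, left_mem_segment ℝ _ _⟩
    exact (hpc.joinedIn _ (left_mem_segment ℝ _ _) _ (right_mem_segment ℝ _ _)).mono hseg
  obtain ⟨x₀, hx₀, hjoin⟩ := hsp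
  refine ⟨x₀, hsub hx₀, ?_⟩
  intro y hy
  have hy0 : 0 < ‖y‖ := lt_of_le_of_lt hR hy
  have hmem : (r / ‖y‖) • y ∈ Metric.sphere (0 : E) r := by
    simp [norm_smul, abs_of_nonneg (div_nonneg hr0 hy0.le), div_mul_cancel₀, hy0.ne', hr0]
  exact ((hjoin hmem).mono hsub).trans ((key y hy).symm)

/-- If a bounded gap `W` and another admissible gap both touch a common point `u`,
the thickness vanishes. -/
lemma thickness_eq_zero_of_touching {d : ℕ} (C W S' : Set (Euc d)) (hW : W ∈ boundedGaps C)
    (u : Euc d) (huW : u ∈ closure W) (huS : u ∈ closure S')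
    (hS' : S' ⊆ (⋃₀ {G' | G' ∈ boundedGaps C ∧ G' ≠ W ∧ EMetric.diam W ≤ EMetric.diam G'})
      ∪ unboundedGapsUnion C) :
    thickness C = 0 := by
  set BIG := (⋃₀ {G' | G' ∈ boundedGaps C ∧ G' ≠ W ∧ EMetric.diam W ≤ EMetric.diam G'})
      ∪ unboundedGapsUnion C with hBIG
  have h1 : setEDist W BIG = 0 := by
    refine le_antisymm ?_ zero_le
    have hstep : ∀ x ∈ W, EMetric.infEdist x BIG ≤ edist u x := by
      intro x hx
      calc EMetric.infEdist x BIG ≤ EMetric.infEdist u BIG + edist x u :=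
            EMetric.infEdist_le_infEdist_add_edist
        _ ≤ EMetric.infEdist u S' + edist x u := by
            gcongr
            exact EMetric.infEdist_anti hS'
        _ = edist u x := by
            rw [show EMetric.infEdist u S' = 0 from EMetric.mem_closure_iff_infEdist_zero.1 huS, zero_add, edist_comm]
    calc setEDist W BIG ≤ ⨅ x ∈ W, edist u x :=
          le_iInf₂ fun x hx => le_trans (iInf₂_le x hx) (hstep x hx)
      _ = EMetric.infEdist u W := rfl
      _ = 0 := EMetric.mem_closure_iff_infEdist_zero.1 huW
  have hne : (boundedGaps C).Nonempty := ⟨W, hW⟩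
  rw [thickness, if_pos hne]
  refine le_antisymm ?_ zero_le
  refine le_trans (iInf₂_le W hW) ?_
  rw [← hBIG, h1, ENNReal.zero_div]

lemma norm_euc_one (x : Euc 1) : ‖x‖ = |x 0| := by
  rw [EuclideanSpace.norm_eq]
  simp [Fin.sum_univ_one, Real.sqrt_sq_eq_abs]

lemma euc_one_ext {x y : Euc 1} (h : x 0 = y 0) : x = y := by
  ext i
  have : i = 0 := Subsingleton.elim i 0
  rw [this, h]

lemma dist_euc_one (x y : Euc 1) : dist x y = |x 0 - y 0| := by
  rw [dist_eq_norm, norm_euc_one]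
  simp

/-- If `u ∈ C` is a right endpoint of some gap of a compact set `C` with `τ(C) > 0`, then
for every `η > 0` there is `δ > 0` with `δ √d < η` and `u + (δ, …, δ) ∈ C`. -/
theorem exists_diagonal_step_into_set
    {d : ℕ} (C : Set (Euc d)) (hC : IsCompact C) (hτ : 0 < thickness C)
    (u : Euc d) (hu : u ∈ C)
    (H : Set (Euc d)) (hH : IsGap C H) (hre : IsRightEndpoint H u) :
    ∀ η > (0 : ℝ), ∃ δ > (0 : ℝ), δ * Real.sqrt d < η ∧
      (WithLp.toLp 2 (fun i => u i + δ) : Euc d) ∈ C := by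
  intro η hη
  by_contra hcon
  push_neg at hcon
  obtain ⟨x₀, hx₀, hHeq⟩ := hH
  -- dimension 0 is impossible
  rcases Nat.eq_zero_or_pos d with hd0 | hd1
  · subst hd0
    exact hx₀ (by rwa [Subsingleton.elim x₀ u])
  -- setup
  have hsd : (0 : ℝ) < Real.sqrt d := Real.sqrt_pos.2 (by exact_mod_cast hd1)
  set ε0 : ℝ := η / (2 * Real.sqrt d) with hε0def
  have hε0 : 0 < ε0 := by positivity
  have hCc : ∀ δ : ℝ, 0 < δ → δ ≤ ε0 → (WithLp.toLp 2 (fun i => u i + δ) : Euc d) ∈ Cᶜ := by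
    intro δ hδ hδ'
    refine hcon δ hδ ?_
    have : δ * Real.sqrt d ≤ ε0 * Real.sqrt d := by
      exact mul_le_mul_of_nonneg_right hδ' hsd.le
    have h2 : ε0 * Real.sqrt d = η / 2 := by
      rw [hε0def]; field_simp
    linarith
  set f : ℝ → Euc d := fun δ => (WithLp.toLp 2 (fun i => u i + δ) : Euc d) with hfdef
  have hf : Continuous f := by
    set w₀ : Euc d := (WithLp.toLp 2 (fun _ => 1) : Euc d) with hw₀
    have : f = fun δ : ℝ => u + δ • w₀ := by
      funext δ
      ext i
      simp [hfdef, hw₀, PiLp.add_apply, PiLp.smul_apply]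
    rw [this]
    exact continuous_const.add (continuous_id.smul continuous_const)
  set v : Euc d := f ε0 with hvdef
  have hv : v ∈ Cᶜ := hCc ε0 hε0 le_rfl
  set G : Set (Euc d) := {y | JoinedIn Cᶜ v y} with hGdef
  have hGgap : IsGap C G := ⟨v, hv, rfl⟩
  -- the diagonal segment is inside G
  have hdiag : ∀ δ : ℝ, 0 < δ → δ ≤ ε0 → f δ ∈ G := by
    intro δ hδ hδ'
    have hIoc : IsPathConnected (Ioc (0:ℝ) ε0) :=
      (convex_Ioc 0 ε0).isPathConnected ⟨ε0, hε0, le_rfl⟩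
    have hD : IsPathConnected (f '' Ioc (0:ℝ) ε0) := hIoc.image hf
    have hDsub : f '' Ioc (0:ℝ) ε0 ⊆ Cᶜ := by
      rintro _ ⟨δ', ⟨h1, h2⟩, rfl⟩
      exact hCc δ' h1 h2
    exact (hD.joinedIn v ⟨ε0, ⟨hε0, le_rfl⟩, rfl⟩ (f δ) ⟨δ, ⟨hδ, hδ'⟩, rfl⟩).mono hDsub
  have hGsub : G ⊆ Cᶜ := fun y hy => hy.target_mem
  have huG : u ∈ closure G := by
    have htend : Filter.Tendsto f (nhdsWithin 0 (Ioi 0)) (nhds u) := by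
      have h0 : f 0 = u := by
        ext i
        simp [hfdef]
      have := hf.tendsto 0
      rw [h0] at this
      exact this.mono_left nhdsWithin_le_nhds
    refine mem_closure_of_tendsto htend ?_
    filter_upwards [Ioo_mem_nhdsGT_of_mem (by constructor <;> [exact le_rfl; exact hε0] :
      (0:ℝ) ∈ Ico 0 ε0)] with δ hδ
    exact hdiag δ hδ.1 hδ.2.le
  have huH : u ∈ closure H := hre.1.1
  have hunotH : u ∉ H := fun h => (hHeq ▸ h).target_mem hu
  have hunotG : u ∉ G := fun h => h.target_mem hu
  have hvnotH : v ∉ H := hre.2 ε0 hε0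
  have hvG : v ∈ G := hdiag ε0 hε0 le_rfl
  have hGH : G ≠ H := fun h => hvnotH (h ▸ hvG)
  have hτne : thickness C ≠ 0 := hτ.ne'
  -- case analysis on boundedness
  by_cases hHb : Bornology.IsBounded H <;> by_cases hGb : Bornology.IsBounded G
  · -- both bounded
    rcases le_total (EMetric.diam G) (EMetric.diam H) with hle | hle
    · refine hτne (thickness_eq_zero_of_touching C G H ⟨hGgap, hGb⟩ u huG huH ?_)
      exact fun y hy => Or.inl ⟨H, ⟨⟨⟨x₀, hx₀, hHeq⟩, hHb⟩, Ne.symm hGH, hle⟩, hy⟩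
    · refine hτne (thickness_eq_zero_of_touching C H G ⟨⟨x₀, hx₀, hHeq⟩, hHb⟩ u huH huG ?_)
      exact fun y hy => Or.inl ⟨G, ⟨⟨hGgap, hGb⟩, hGH, hle⟩, hy⟩
  · -- H bounded, G unbounded
    refine hτne (thickness_eq_zero_of_touching C H G ⟨⟨x₀, hx₀, hHeq⟩, hHb⟩ u huH huG ?_)
    exact fun y hy => Or.inr ⟨G, ⟨hGgap, hGb⟩, hy⟩
  · -- G bounded, H unbounded
    refine hτne (thickness_eq_zero_of_touching C G H ⟨hGgap, hGb⟩ u huG huH ?_)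
    exact fun y hy => Or.inr ⟨H, ⟨⟨x₀, hx₀, hHeq⟩, hHb⟩, hy⟩
  · -- both unbounded
    have hHsub : H ⊆ Cᶜ := hHeq ▸ fun y hy => hy.target_mem
    rcases Nat.lt_or_ge d 2 with hd2 | hd2
    · -- d = 1
      have hd1' : d = 1 := by omega
      subst hd1'
      have hne0 : ∀ y ∈ Cᶜ, ∀ c ∈ C, y 0 ≠ c 0 := fun y hy c hc h => hy (euc_one_ext h ▸ hc)
      have hHpc : IsPathConnected H := hHeq ▸ isPathConnected_pathComponentIn hx₀
      have hGpc : IsPathConnected G := isPathConnected_pathComponentIn hv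
      have hπ : Continuous (fun y : Euc 1 => y 0) := (EuclideanSpace.proj (0 : Fin 1)).continuous
      have hHoc : OrdConnected ((fun y : Euc 1 => y 0) '' H) :=
        (hHpc.isConnected.isPreconnected.image _ hπ.continuousOn).ordConnected
      have hGoc : OrdConnected ((fun y : Euc 1 => y 0) '' G) :=
        (hGpc.isConnected.isPreconnected.image _ hπ.continuousOn).ordConnected
      have hHleft : ∀ h ∈ H, h 0 < u 0 := by
        intro h hh
        rcases lt_trichotomy (h 0) (u 0) with h1 | h1 | h1
        · exact h1
        · exact absurd (euc_one_ext h1 ▸ hu) (hHsub hh)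
        · exfalso
          have hh' : (WithLp.toLp 2 (fun i => u i + (h 0 - u 0)) : Euc 1) ∈ H := by
            have heq : (WithLp.toLp 2 (fun i => u i + (h 0 - u 0)) : Euc 1) = h := by
              refine euc_one_ext ?_
              show u 0 + (h 0 - u 0) = h 0
              ring
            rw [heq]
            exact hh
          exact hre.2 (h 0 - u 0) (by linarith) hh'
      have hCu : C = {u} := by
        refine Subset.antisymm ?_ (by simpa using hu)
        intro c hc
        rcases lt_trichotomy (c 0) (u 0) with hcu | hcu | hcu
        · -- H would be bounded
          exfalso
          apply hHb
          have hHbnd : ∀ h ∈ H, c 0 < h 0 ∧ h 0 < u 0 := by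
            intro h hh
            refine ⟨?_, hHleft h hh⟩
            by_contra hle
            push_neg at hle
            obtain ⟨p, hp, hpd⟩ := Metric.mem_closure_iff.1 huH (u 0 - c 0) (by linarith)
            rw [dist_euc_one] at hpd
            have hpc : c 0 < p 0 := by
              have h2 := abs_lt.1 hpd
              linarith [h2.1, h2.2]
            obtain ⟨g, hg, hg0⟩ :=
              hHoc.out (mem_image_of_mem _ hh) (mem_image_of_mem _ hp) ⟨hle, hpc.le⟩
            exact hne0 g (hHsub hg) c hc hg0
          refine (Metric.isBounded_closedBall (x := (0 : Euc 1)) (r := max |c 0| |u 0|)).subset ?_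
          intro h hh
          rw [Metric.mem_closedBall, dist_zero_right, norm_euc_one, abs_le]
          rcases hHbnd h hh with ⟨h1, h2⟩
          have l1 := le_max_left |c 0| |u 0|
          have l2 := le_max_right |c 0| |u 0|
          have l3 := neg_abs_le (c 0)
          have l4 := le_abs_self (u 0)
          constructor <;> linarith
        · exact euc_one_ext hcu
        · -- G would be bounded
          exfalso
          apply hGb
          set δ1 : ℝ := min ε0 ((c 0 - u 0) / 2) with hδ1
          have hδ1p : 0 < δ1 := lt_min hε0 (by linarith)
          have hpG : f δ1 ∈ G := hdiag δ1 hδ1p (min_le_left _ _)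
          have hp0 : f δ1 0 = u 0 + δ1 := rfl
          have hp0' : u 0 < f δ1 0 ∧ f δ1 0 < c 0 := by
            constructor
            · rw [hp0]; linarith
            · rw [hp0]
              have := min_le_right ε0 ((c 0 - u 0) / 2)
              linarith
          have hGbnd : ∀ w ∈ G, u 0 < w 0 ∧ w 0 < c 0 := by
            intro w hw
            constructor
            · by_contra hle
              push_neg at hle
              obtain ⟨g, hg, hg0⟩ :=
                hGoc.out (mem_image_of_mem _ hw) (mem_image_of_mem _ hpG) ⟨hle, hp0'.1.le⟩
              exact hne0 g (hGsub hg) u hu hg0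
            · by_contra hle
              push_neg at hle
              obtain ⟨g, hg, hg0⟩ :=
                hGoc.out (mem_image_of_mem _ hpG) (mem_image_of_mem _ hw) ⟨hp0'.2.le, hle⟩
              exact hne0 g (hGsub hg) c hc hg0
          refine (Metric.isBounded_closedBall (x := (0 : Euc 1)) (r := max |u 0| |c 0|)).subset ?_
          intro w hw
          rw [Metric.mem_closedBall, dist_zero_right, norm_euc_one, abs_le]
          rcases hGbnd w hw with ⟨h1, h2⟩
          have l1 := le_max_left |u 0| |c 0|
          have l2 := le_max_right |u 0| |c 0|
          have l3 := neg_abs_le (u 0)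
          have l4 := le_abs_self (c 0)
          constructor <;> linarith
      -- no bounded gaps
      have hbg : boundedGaps C = ∅ := by
        ext W
        simp only [boundedGaps, mem_setOf_eq, mem_empty_iff_false, iff_false, not_and]
        rintro ⟨x, hx, rfl⟩ hWb
        have hxu : x ≠ u := by
          rw [hCu] at hx
          simpa using hx
        have hx0 : x 0 ≠ u 0 := fun h => hxu (euc_one_ext h)
        obtain ⟨r, hr⟩ := hWb.subset_closedBall 0
        rcases lt_or_gt_of_ne hx0 with hlt | hgt
        · set t : ℝ := min (u 0 - 1) (-(|r| + 1)) with ht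
          set q : Euc 1 := (WithLp.toLp 2 (fun _ => t) : Euc 1) with hq
          have hqu : q 0 < u 0 := by
            have := min_le_left (u 0 - 1) (-(|r| + 1))
            simpa [hq] using by linarith
          have hUsub : {z : Euc 1 | z 0 < u 0} ⊆ Cᶜ := by
            intro z hz hzC
            rw [hCu, mem_singleton_iff] at hzC
            rw [hzC] at hz
            simp only [mem_setOf_eq] at hz
            exact lt_irrefl _ hz
          have hUc : Convex ℝ {z : Euc 1 | z 0 < u 0} :=
            (convex_Iio (u 0)).linear_preimage (EuclideanSpace.projₗ (𝕜 := ℝ) (0 : Fin 1))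
          have hUpc : IsPathConnected {z : Euc 1 | z 0 < u 0} := hUc.isPathConnected ⟨x, hlt⟩
          have hqW : q ∈ {y | JoinedIn Cᶜ x y} := (hUpc.joinedIn x hlt q hqu).mono hUsub
          have hq1 := hr hqW
          rw [Metric.mem_closedBall, dist_zero_right, norm_euc_one] at hq1
          have hq2 : q 0 = t := rfl
          rw [hq2] at hq1
          have htle : t ≤ -(|r| + 1) := min_le_right _ _
          have : |r| + 1 ≤ |t| := le_trans (by linarith) (neg_le_abs t)
          linarith [le_abs_self r]
        · set t : ℝ := max (u 0 + 1) (|r| + 1) with ht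
          set q : Euc 1 := (WithLp.toLp 2 (fun _ => t) : Euc 1) with hq
          have hqu : u 0 < q 0 := by
            have := le_max_left (u 0 + 1) (|r| + 1)
            simpa [hq] using by linarith
          have hUsub : {z : Euc 1 | u 0 < z 0} ⊆ Cᶜ := by
            intro z hz hzC
            rw [hCu, mem_singleton_iff] at hzC
            rw [hzC] at hz
            simp only [mem_setOf_eq] at hz
            exact lt_irrefl _ hz
          have hUc : Convex ℝ {z : Euc 1 | u 0 < z 0} :=
            (convex_Ioi (u 0)).linear_preimage (EuclideanSpace.projₗ (𝕜 := ℝ) (0 : Fin 1))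
          have hUpc : IsPathConnected {z : Euc 1 | u 0 < z 0} := hUc.isPathConnected ⟨x, hgt⟩
          have hqW : q ∈ {y | JoinedIn Cᶜ x y} := (hUpc.joinedIn x hgt q hqu).mono hUsub
          have hq1 := hr hqW
          rw [Metric.mem_closedBall, dist_zero_right, norm_euc_one] at hq1
          have hq2 : q 0 = t := rfl
          rw [hq2] at hq1
          have htle : |r| + 1 ≤ t := le_max_right _ _
          have : |r| + 1 ≤ |t| := le_trans htle (le_abs_self t)
          linarith [le_abs_self r]
      -- no interior
      have hint : ¬ (interior C).Nonempty := by
        rintro ⟨z, hz⟩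
        have hzu : z = u := by
          have h1 := interior_subset hz
          rwa [hCu, mem_singleton_iff] at h1
        subst hzu
        obtain ⟨ε, hεp, hball⟩ := Metric.isOpen_iff.1 isOpen_interior z hz
        set δ : ℝ := min (ε / 2) ε0 with hδ
        have hδp : 0 < δ := lt_min (by linarith) hε0
        have hmem : f δ ∈ Metric.ball z ε := by
          rw [Metric.mem_ball, dist_euc_one]
          have hfz : f δ 0 - z 0 = δ := by simp [hfdef]
          rw [hfz, abs_of_pos hδp]
          have := min_le_left (ε / 2) ε0
          linarith
        exact hCc δ hδp (min_le_right _ _) (interior_subset (hball hmem))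
      have hthick : thickness C = 0 := by
        rw [thickness, if_neg (by simp [hbg]), if_neg hint]
      exact hτne hthick
    · -- d ≥ 2
      have hrank : 1 < Module.rank ℝ (Euc d) := by
        rw [← Module.finrank_eq_rank, finrank_euclideanSpace_fin]
        exact_mod_cast hd2
      obtain ⟨R, hR⟩ := hC.isBounded.subset_closedBall 0
      set R' : ℝ := max R 0 with hR'
      have hR'0 : (0 : ℝ) ≤ R' := le_max_right _ _
      have hSsub : {z : Euc d | R' < ‖z‖} ⊆ Cᶜ := by
        intro z hz hzC
        have h1 := hR hzC
        rw [Metric.mem_closedBall, dist_zero_right] at h1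
        exact absurd hz (not_lt.2 (le_trans h1 (le_max_left _ _)))
      have hSpc := isPathConnected_norm_gt hrank R' hR'0
      have hbig : ∀ W : Set (Euc d), ¬ Bornology.IsBounded W → ∃ w ∈ W, R' < ‖w‖ := by
        intro W hW
        by_contra hc
        push_neg at hc
        refine hW ((Metric.isBounded_closedBall (x := (0 : Euc d)) (r := R')).subset ?_)
        intro w hw
        rw [Metric.mem_closedBall, dist_zero_right]
        exact hc w hw
      obtain ⟨hh, hhH, hhn⟩ := hbig H hHb
      obtain ⟨gg, ggG, ggn⟩ := hbig G hGb
      have hjoin : JoinedIn Cᶜ hh gg := (hSpc.joinedIn hh hhn gg ggn).mono hSsub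
      have h1 : JoinedIn Cᶜ x₀ hh := by
        rw [hHeq] at hhH
        exact hhH
      have h2 : JoinedIn Cᶜ v gg := ggG
      have hvH : v ∈ H := by
        rw [hHeq]
        exact (h1.trans hjoin).trans h2.symm
      exact hvnotH hvH


end
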